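/- Let A be a unital C*-algebra, let 0 < δ < 1, let q ∈ A be a projection, and let a ∈ A with 0 ≤ a ≤ 1 satisfy (1−q) a (1−q) ≤ δ·1. Then for every x ∈ A with ‖x‖ ≤ 1, ‖a x a − (q a q) x (q a q)‖ ≤ 20·√δ. -/

import Mathlib

/-- If `q` is a projection in a unital C*-algebra, `0 < δ < 1`, and `0 ≤ a ≤ 1` satisfies
`(1−q) a (1−q) ≤ δ·1`, then `‖a x a − (q a q) x (q a q)‖ ≤ 20·√δ` for every `x` with
`‖x‖ ≤ 1`. -/
theorem stmt10 {A : Type*} [CStarAlgebra A] [PartialOrder A] [StarOrderedRing A]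
    (δ : ℝ) (hδ0 : 0 < δ) (hδ1 : δ < 1)
    (q : A) (hq_sa : q = star q) (hq_idem : q * q = q)
    (a : A) (ha0 : 0 ≤ a) (ha1 : a ≤ 1)
    (haq : (1 - q) * a * (1 - q) ≤ (δ : ℂ) • (1 : A)) :
    ∀ x : A, ‖x‖ ≤ 1 →
      ‖a * x * a - (q * a * q) * x * (q * a * q)‖ ≤ 20 * Real.sqrt δ := by
  intro x hx
  set s := Real.sqrt δ with hs
  have hs0 : 0 ≤ s := Real.sqrt_nonneg δ
  have hss : s * s = δ := Real.mul_self_sqrt hδ0.le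
  have hp_sa : star (1 - q : A) = 1 - q := by rw [star_sub, star_one, ← hq_sa]
  -- rewrite the hypothesis using algebraMap ℝ
  have halg : ((δ : ℂ) • (1 : A)) = algebraMap ℝ A δ := by
    rw [Algebra.algebraMap_eq_smul_one]
    norm_num [← Complex.coe_smul]
  rw [halg] at haq
  -- a^2 ≤ a
  have hsq : a * a ≤ a := by
    have := CStarAlgebra.pow_antitone ha0 ha1 (by norm_num : 1 ≤ 2)
    simpa [pow_succ, pow_one] using this
  -- ‖a * (1 - q)‖ ≤ s
  have hkey : ‖a * (1 - q)‖ ≤ s := by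
    have h1 : (1 - q) * (a * a) * (1 - q) ≤ algebraMap ℝ A δ := by
      calc (1 - q) * (a * a) * (1 - q) = star (1 - q) * (a * a) * (1 - q) := by rw [hp_sa]
        _ ≤ star (1 - q) * a * (1 - q) := star_left_conjugate_le_conjugate hsq _
        _ = (1 - q) * a * (1 - q) := by rw [hp_sa]
        _ ≤ algebraMap ℝ A δ := haq
    have hpos : 0 ≤ (1 - q) * (a * a) * (1 - q) := by
      have haa : 0 ≤ a * a := by
        have := star_mul_self_nonneg a
        rwa [ha0.star_eq] at this
      have := star_left_conjugate_nonneg haa (1 - q)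
      rwa [hp_sa] at this
    have hn : ‖(1 - q) * (a * a) * (1 - q)‖ ≤ δ :=
      (CStarAlgebra.norm_le_iff_le_algebraMap _ hδ0.le hpos).mpr h1
    have heq : ‖a * (1 - q)‖ * ‖a * (1 - q)‖ = ‖(1 - q) * (a * a) * (1 - q)‖ := by
      rw [← CStarRing.norm_star_mul_self (x := a * (1 - q))]
      congr 1
      rw [star_mul, hp_sa, ha0.star_eq]
      noncomm_ring
    nlinarith [norm_nonneg (a * (1 - q))]
  have hkey' : ‖(1 - q) * a‖ ≤ s := by
    have : (1 - q) * a = star (a * (1 - q)) := by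
      rw [star_mul, hp_sa, ha0.star_eq]
    rw [this, norm_star]
    exact hkey
  -- norms of q and a
  have hqn : ‖q‖ ≤ 1 := by
    have : ‖q‖ * ‖q‖ = ‖q‖ := by
      rw [← CStarRing.norm_star_mul_self (x := q), ← hq_sa, hq_idem]
    nlinarith [norm_nonneg q]
  have han : ‖a‖ ≤ 1 := (CStarAlgebra.norm_le_one_iff_of_nonneg a ha0).mpr ha1
  -- ‖a - q a q‖ ≤ 2 s
  have hdiff : ‖a - q * a * q‖ ≤ 2 * s := by
    have hd : a - q * a * q = a * (1 - q) + (1 - q) * a * q := by noncomm_ring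
    rw [hd]
    calc ‖a * (1 - q) + (1 - q) * a * q‖ ≤ ‖a * (1 - q)‖ + ‖(1 - q) * a * q‖ := norm_add_le _ _
      _ ≤ s + ‖(1 - q) * a‖ * ‖q‖ := by gcongr; exact norm_mul_le _ _
      _ ≤ s + s * 1 := by gcongr
      _ = 2 * s := by noncomm_ring
  have hqaq : ‖q * a * q‖ ≤ 1 := by
    calc ‖q * a * q‖ ≤ ‖q * a‖ * ‖q‖ := norm_mul_le _ _
      _ ≤ (‖q‖ * ‖a‖) * ‖q‖ := by gcongr; exact norm_mul_le _ _
      _ ≤ (1 * 1) * 1 := by gcongr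
      _ = 1 := by noncomm_ring
  -- final estimate
  have hsplit : a * x * a - (q * a * q) * x * (q * a * q)
      = (a - q * a * q) * x * a + (q * a * q) * x * (a - q * a * q) := by noncomm_ring
  rw [hsplit]
  calc ‖(a - q * a * q) * x * a + (q * a * q) * x * (a - q * a * q)‖
      ≤ ‖(a - q * a * q) * x * a‖ + ‖(q * a * q) * x * (a - q * a * q)‖ := norm_add_le _ _
    _ ≤ ‖(a - q * a * q) * x‖ * ‖a‖ + ‖(q * a * q) * x‖ * ‖a - q * a * q‖ := by
        gcongr <;> exact norm_mul_le _ _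
    _ ≤ (‖a - q * a * q‖ * ‖x‖) * ‖a‖ + (‖q * a * q‖ * ‖x‖) * ‖a - q * a * q‖ := by
        gcongr <;> exact norm_mul_le _ _
    _ ≤ ((2 * s) * 1) * 1 + (1 * 1) * (2 * s) := by gcongr
    _ ≤ 20 * s := by nlinarith
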